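/- Suppose A,B,C,D are not coplanar, and write A=(a₁,a₂,a₃), B=(b₁,b₂,b₃), C=(c₁,c₂,c₃), D=(d₁,d₂,d₃). Let Δ be the determinant of the 3×3 matrix with rows (a₁−b₁, a₂−b₂, a₃−b₃), (a₁−c₁, a₂−c₂, a₃−c₃), (a₁−d₁, a₂−d₂, a₃−d₃); then Δ ≠ 0. If (X,Y) is a solution of System (*) with X = (x₁,x₂,x₃), then k_T‖Y−T‖² > 1 for every T (so that Γ_T(Y) is defined) and: x₁ = (1/(2Δ))·det[[Γ_B(Y)−Γ_A(Y), a₂−b₂, a₃−b₃],[Γ_C(Y)−Γ_A(Y), a₂−c₂, a₃−c₃],[Γ_D(Y)−Γ_A(Y), a₂−d₂, a₃−d₃]], x₂ = (1/(2Δ))·det[[a₁−b₁, Γ_B(Y)−Γ_A(Y), a₃−b₃],[a₁−c₁, Γ_C(Y)−Γ_A(Y), a₃−c₃],[a₁−d₁, Γ_D(Y)−Γ_A(Y), a₃−d₃]], and x₃ = (1/(2Δ))·det[[a₁−b₁, a₂−b₂, Γ_B(Y)−Γ_A(Y)],[a₁−c₁, a₂−c₂, Γ_C(Y)−Γ_A(Y)],[a₁−d₁,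 a₂−d₂, Γ_D(Y)−Γ_A(Y)]]. -/

import Mathlib

noncomputable section

/-- The Euclidean space ℝ³. -/
abbrev E3 := EuclideanSpace ℝ (Fin 3)

/-- `kc Xs Ys T` is the constant `k_T = 1/‖X*−T‖² + 1/‖Y*−T‖²`. -/
def kc (Xs Ys T : E3) : ℝ := 1 / ‖Xs - T‖ ^ 2 + 1 / ‖Ys - T‖ ^ 2

/-- `(X, Y)` is a solution of System (*). -/
def IsSol (A B C D E F Xs Ys X Y : E3) : Prop :=
  ∀ T ∈ ({A, B, C, D, E, F} : Set E3),
    X ≠ T ∧ Y ≠ T ∧ 1 / ‖X - T‖ ^ 2 + 1 / ‖Y - T‖ ^ 2 = kc Xs Ys T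

/-- Condition (i): no four of the six points `A,B,C,D,E,F` are coplanar. -/
def CondI (A B C D E F : E3) : Prop :=
  ∀ T₁ T₂ T₃ T₄ : E3,
    T₁ ∈ ({A, B, C, D, E, F} : Set E3) → T₂ ∈ ({A, B, C, D, E, F} : Set E3) →
    T₃ ∈ ({A, B, C, D, E, F} : Set E3) → T₄ ∈ ({A, B, C, D, E, F} : Set E3) →
    T₁ ≠ T₂ → T₁ ≠ T₃ → T₁ ≠ T₄ → T₂ ≠ T₃ → T₂ ≠ T₄ → T₃ ≠ T₄ →
    ¬ Coplanar ℝ ({T₁, T₂, T₃, T₄} : Set E3)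

/-- Condition (ii): no four of the six spheres of center `T` and radius `1/√k_T`
share a common point of ℝ³. -/
def CondII (A B C D E F Xs Ys : E3) : Prop :=
  ∀ T₁ T₂ T₃ T₄ : E3,
    T₁ ∈ ({A, B, C, D, E, F} : Set E3) → T₂ ∈ ({A, B, C, D, E, F} : Set E3) →
    T₃ ∈ ({A, B, C, D, E, F} : Set E3) → T₄ ∈ ({A, B, C, D, E, F} : Set E3) →
    T₁ ≠ T₂ → T₁ ≠ T₃ → T₁ ≠ T₄ → T₂ ≠ T₃ → T₂ ≠ T₄ → T₃ ≠ T₄ →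
    ¬ ∃ P : E3,
        ‖P - T₁‖ ^ 2 = 1 / kc Xs Ys T₁ ∧ ‖P - T₂‖ ^ 2 = 1 / kc Xs Ys T₂ ∧
        ‖P - T₃‖ ^ 2 = 1 / kc Xs Ys T₃ ∧ ‖P - T₄‖ ^ 2 = 1 / kc Xs Ys T₄

/-- `Γ_T(Y) = ‖Y−T‖²/(k_T‖Y−T‖² − 1) − ‖T‖²`. -/
def Gamma (Xs Ys T Y : E3) : ℝ :=
  ‖Y - T‖ ^ 2 / (kc Xs Ys T * ‖Y - T‖ ^ 2 - 1) - ‖T‖ ^ 2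

open Submodule Module in
lemma det_ne_zero_of_not_coplanar' (A B C D : E3)
    (hnc : ¬ Coplanar ℝ ({A, B, C, D} : Set E3)) :
    Matrix.det !![A 0 - B 0, A 1 - B 1, A 2 - B 2;
                  A 0 - C 0, A 1 - C 1, A 2 - C 2;
                  A 0 - D 0, A 1 - D 1, A 2 - D 2] ≠ 0 := by
  intro hdet
  apply hnc
  set M : Matrix (Fin 3) (Fin 3) ℝ :=
    !![A 0 - B 0, A 1 - B 1, A 2 - B 2;
       A 0 - C 0, A 1 - C 1, A 2 - C 2;
       A 0 - D 0, A 1 - D 1, A 2 - D 2] with hM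
  set v : Fin 3 → E3 := ![A - B, A - C, A - D] with hv
  have hrows : ¬ LinearIndependent ℝ (fun i => M i) := by
    rw [show (fun i => M i) = M.row from rfl, Matrix.linearIndependent_rows_iff_isUnit, Matrix.isUnit_iff_isUnit_det, hdet]
    simp
  have hvdep : ¬ LinearIndependent ℝ v := by
    intro h
    apply hrows
    have heq : (fun i => M i) =
        (fun i => (WithLp.linearEquiv 2 ℝ (Fin 3 → ℝ)) (v i)) := by
      funext i j
      fin_cases i <;> fin_cases j <;>
        simp [hM, hv, WithLp.linearEquiv]
    rw [heq]
    exact h.map' (WithLp.linearEquiv 2 ℝ (Fin 3 → ℝ)).toLinearMap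
      (LinearEquiv.ker _)
  have hsp : vectorSpan ℝ ({A, B, C, D} : Set E3) = span ℝ (Set.range v) := by
    rw [vectorSpan_eq_span_vsub_set_left ℝ (show A ∈ ({A, B, C, D} : Set E3) by simp)]
    have himg : (A -ᵥ ·) '' ({A, B, C, D} : Set E3)
        = insert 0 (Set.range v) := by
      simp only [Set.image_insert_eq, Set.image_singleton]
      have : Set.range v = {A - B, A - C, A - D} := by
        ext x
        simp [hv, Fin.exists_fin_two, Fin.exists_fin_succ, or_assoc]; tauto
      rw [this]
      simp [vsub_eq_sub]
    rw [himg, span_insert_zero]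
  rw [coplanar_iff_finrank_le_two, hsp]
  by_contra hgt
  push_neg at hgt
  have hle : finrank ℝ (span ℝ (Set.range v)) ≤ 3 := by
    have := finrank_range_le_card (R := ℝ) v
    simpa [Set.finrank] using this
  have h3 : finrank ℝ (span ℝ (Set.range v)) = 3 := le_antisymm hle hgt
  exact hvdep (linearIndependent_iff_card_eq_finrank_span.2 (by
    simp [Set.finrank, h3]))

lemma key_lemma' (A B C D E F Xs Ys X Y : E3) (hsol : IsSol A B C D E F Xs Ys X Y)
    (T : E3) (hT : T ∈ ({A, B, C, D, E, F} : Set E3)) :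
    kc Xs Ys T * ‖Y - T‖ ^ 2 > 1 ∧
      Gamma Xs Ys T Y = ‖X‖ ^ 2 - 2 * ((X 0) * (T 0) + (X 1) * (T 1) + (X 2) * (T 2)) := by
  obtain ⟨hXT, hYT, heq⟩ := hsol T hT
  have hx : (0:ℝ) < ‖X - T‖ ^ 2 := by
    have : ‖X - T‖ ≠ 0 := norm_ne_zero_iff.2 (sub_ne_zero.2 hXT)
    positivity
  have hy : (0:ℝ) < ‖Y - T‖ ^ 2 := by
    have : ‖Y - T‖ ≠ 0 := norm_ne_zero_iff.2 (sub_ne_zero.2 hYT)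
    positivity
  have hky : kc Xs Ys T * ‖Y - T‖ ^ 2 - 1 = ‖Y - T‖ ^ 2 / ‖X - T‖ ^ 2 := by
    rw [← heq, add_mul, one_div_mul_cancel hy.ne']; ring
  have hpos : (0:ℝ) < kc Xs Ys T * ‖Y - T‖ ^ 2 - 1 := by
    rw [hky]; positivity
  refine ⟨by linarith, ?_⟩
  have hG : Gamma Xs Ys T Y = ‖X - T‖ ^ 2 - ‖T‖ ^ 2 := by
    rw [Gamma, hky]
    field_simp [norm_ne_zero_iff.2 (sub_ne_zero.2 hYT)]
  rw [hG, norm_sub_sq_real X T]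
  have hinner : (inner ℝ X T : ℝ) = (X 0) * (T 0) + (X 1) * (T 1) + (X 2) * (T 2) := by
    simp [PiLp.inner_apply, RCLike.inner_apply, Fin.sum_univ_three, mul_comm]
  rw [hinner]; ring

/-- If A,B,C,D are not coplanar, the determinant Δ is nonzero and, at any solution
(X,Y) of System (*), the coordinates of X are given by Cramer-type formulas in the
quantities Γ_T(Y). -/
theorem cramer_formula_for_X (A B C D E F Xs Ys : E3)
    (hdist : List.Pairwise (· ≠ ·) [A, B, C, D, E, F, Xs, Ys])
    (hnc : ¬ Coplanar ℝ ({A, B, C, D} : Set E3))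
    (Δ : ℝ)
    (hΔ : Δ = Matrix.det !![A 0 - B 0, A 1 - B 1, A 2 - B 2;
                            A 0 - C 0, A 1 - C 1, A 2 - C 2;
                            A 0 - D 0, A 1 - D 1, A 2 - D 2]) :
    Δ ≠ 0 ∧
    ∀ X Y : E3, IsSol A B C D E F Xs Ys X Y →
      (∀ T ∈ ({A, B, C, D, E, F} : Set E3), kc Xs Ys T * ‖Y - T‖ ^ 2 > 1) ∧
      X 0 = (1 / (2 * Δ)) * Matrix.det
        !![Gamma Xs Ys B Y - Gamma Xs Ys A Y, A 1 - B 1, A 2 - B 2;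
           Gamma Xs Ys C Y - Gamma Xs Ys A Y, A 1 - C 1, A 2 - C 2;
           Gamma Xs Ys D Y - Gamma Xs Ys A Y, A 1 - D 1, A 2 - D 2] ∧
      X 1 = (1 / (2 * Δ)) * Matrix.det
        !![A 0 - B 0, Gamma Xs Ys B Y - Gamma Xs Ys A Y, A 2 - B 2;
           A 0 - C 0, Gamma Xs Ys C Y - Gamma Xs Ys A Y, A 2 - C 2;
           A 0 - D 0, Gamma Xs Ys D Y - Gamma Xs Ys A Y, A 2 - D 2] ∧
      X 2 = (1 / (2 * Δ)) * Matrix.det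
        !![A 0 - B 0, A 1 - B 1, Gamma Xs Ys B Y - Gamma Xs Ys A Y;
           A 0 - C 0, A 1 - C 1, Gamma Xs Ys C Y - Gamma Xs Ys A Y;
           A 0 - D 0, A 1 - D 1, Gamma Xs Ys D Y - Gamma Xs Ys A Y] := by
  have hΔ0 : Δ ≠ 0 := by
    rw [hΔ]; exact det_ne_zero_of_not_coplanar' A B C D hnc
  refine ⟨hΔ0, ?_⟩
  intro X Y hsol
  have key := fun T hT => key_lemma' A B C D E F Xs Ys X Y hsol T hT
  refine ⟨fun T hT => (key T hT).1, ?_⟩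
  have hgB : Gamma Xs Ys B Y - Gamma Xs Ys A Y =
      2 * ((A 0 - B 0) * X 0 + (A 1 - B 1) * X 1 + (A 2 - B 2) * X 2) := by
    rw [(key B (by simp)).2, (key A (by simp)).2]; ring
  have hgC : Gamma Xs Ys C Y - Gamma Xs Ys A Y =
      2 * ((A 0 - C 0) * X 0 + (A 1 - C 1) * X 1 + (A 2 - C 2) * X 2) := by
    rw [(key C (by simp)).2, (key A (by simp)).2]; ring
  have hgD : Gamma Xs Ys D Y - Gamma Xs Ys A Y =
      2 * ((A 0 - D 0) * X 0 + (A 1 - D 1) * X 1 + (A 2 - D 2) * X 2) := by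
    rw [(key D (by simp)).2, (key A (by simp)).2]; ring
  have hΔ' : Δ = (A 0 - B 0) * ((A 1 - C 1) * (A 2 - D 2) - (A 2 - C 2) * (A 1 - D 1))
      - (A 1 - B 1) * ((A 0 - C 0) * (A 2 - D 2) - (A 2 - C 2) * (A 0 - D 0))
      + (A 2 - B 2) * ((A 0 - C 0) * (A 1 - D 1) - (A 1 - C 1) * (A 0 - D 0)) := by
    rw [hΔ, Matrix.det_fin_three]; simp [Matrix.cons_val_zero, Matrix.cons_val_one]; ring
  have hne : ((A 0 - B 0) * ((A 1 - C 1) * (A 2 - D 2) - (A 2 - C 2) * (A 1 - D 1))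
      - (A 1 - B 1) * ((A 0 - C 0) * (A 2 - D 2) - (A 2 - C 2) * (A 0 - D 0))
      + (A 2 - B 2) * ((A 0 - C 0) * (A 1 - D 1) - (A 1 - C 1) * (A 0 - D 0))) ≠ 0 := by
    rw [← hΔ']; exact hΔ0
  refine ⟨?_, ?_, ?_⟩ <;>
  · rw [hΔ', Matrix.det_fin_three]
    simp only [Matrix.cons_val', Matrix.cons_val_zero, Matrix.cons_val_one, Matrix.head_cons,
      Matrix.empty_val', Matrix.cons_val_fin_one, Matrix.head_fin_const, Matrix.cons_val_two,
      Matrix.tail_cons, Matrix.of_apply, Matrix.cons_val_fin_one]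
    rw [hgB, hgC, hgD]
    rw [one_div, ← div_eq_inv_mul, eq_div_iff (mul_ne_zero two_ne_zero hne)]
    ring
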